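/- Let s, μ, c > 0 with μ ≥ c. Define S(x) = ∫₀ˣ e^{-2sζ/c}(1-ζ)^{-2μ/c} dζ and m(x) = e^{2sx/c}(1-x)^{2μ/c-1}/(cx). Then m(x)S(x)² is NOT integrable on (0,1), while m(x)S(x) IS integrable on (0,1). -/

import Mathlib

open MeasureTheory

lemma aux_integral (θ x : ℝ) (hθ : 2 ≤ θ) (hx0 : 0 ≤ x) (hx1 : x < 1) :
    ∫ t in (0:ℝ)..x, (1 - t) ^ (-θ) = ((1-x) ^ (1-θ) - 1) / (θ - 1) := by
  have h1x : 0 < 1 - x := by linarith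
  have h := intervalIntegral.integral_comp_sub_left (a := (0:ℝ)) (b := x)
    (fun u : ℝ => u ^ (-θ)) 1
  rw [h]
  rw [integral_rpow (Or.inr ⟨by linarith, by
    rw [Set.uIcc_of_le (by linarith : 1 - x ≤ 1 - 0)]
    intro hmem
    have := hmem.1
    simp at this
    linarith⟩)]
  have h1 : (1:ℝ) - 0 = 1 := by ring
  rw [h1, Real.one_rpow]
  have h2 : -θ + 1 = 1 - θ := by ring
  rw [h2]
  have hne : θ - 1 ≠ 0 := by linarith
  have hne' : 1 - θ ≠ 0 := by linarith
  field_simp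
  ring

lemma aux_cont (θ x : ℝ) (hx1 : x < 1) :
    ContinuousOn (fun t : ℝ => (1 - t) ^ (-θ)) (Set.Icc 0 x) := by
  apply ContinuousOn.rpow_const
  · exact (continuous_const.sub continuous_id).continuousOn
  · intro t ht
    exact Or.inl (by simp only [ne_eq]; intro hcon; nlinarith [ht.2])

lemma aux_cont2 (s c θ x : ℝ) (hx1 : x < 1) :
    ContinuousOn (fun t : ℝ => Real.exp (-2*s*t/c) * (1 - t) ^ (-θ)) (Set.Icc 0 x) :=
  (((continuous_const.mul continuous_id).div_const c).rexp).continuousOn.mul (aux_cont θ x hx1)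

lemma aux_intble (θ x : ℝ) (hx0 : 0 ≤ x) (hx1 : x < 1) :
    IntervalIntegrable (fun t : ℝ => (1 - t) ^ (-θ)) volume 0 x := by
  apply ContinuousOn.intervalIntegrable
  rw [Set.uIcc_of_le hx0]; exact aux_cont θ x hx1

lemma aux_intble2 (s c θ x : ℝ) (hx0 : 0 ≤ x) (hx1 : x < 1) :
    IntervalIntegrable (fun t : ℝ => Real.exp (-2*s*t/c) * (1 - t) ^ (-θ)) volume 0 x := by
  apply ContinuousOn.intervalIntegrable
  rw [Set.uIcc_of_le hx0]
  exact aux_cont2 s c θ x hx1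

lemma aux_S_lower (s c θ x : ℝ) (hs : 0 < s) (hc : 0 < c) (hθ : 2 ≤ θ)
    (hx0 : 0 < x) (hx1 : x < 1) :
    Real.exp (-(2*s/c)) * (((1-x) ^ (1-θ) - 1) / (θ-1)) ≤
      ∫ t in (0:ℝ)..x, Real.exp (-2*s*t/c) * (1 - t) ^ (-θ) := by
  have key : Real.exp (-(2*s/c)) * ∫ t in (0:ℝ)..x, (1 - t) ^ (-θ) ≤
      ∫ t in (0:ℝ)..x, Real.exp (-2*s*t/c) * (1 - t) ^ (-θ) := by
    rw [← intervalIntegral.integral_const_mul]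
    apply intervalIntegral.integral_mono_on hx0.le
      ((aux_intble θ x hx0.le hx1).const_mul _) (aux_intble2 s c θ x hx0.le hx1)
    intro t ht
    have h2 : 0 ≤ (1 - t) ^ (-θ) := Real.rpow_nonneg (by nlinarith [ht.2]) _
    apply mul_le_mul_of_nonneg_right _ h2
    apply Real.exp_le_exp.2
    rw [show -(2*s/c) = -2*s*1/c from by ring, div_le_div_iff₀ hc hc]
    nlinarith [mul_pos hs hc, ht.2, hx1]
  rw [aux_integral θ x hθ hx0.le hx1] at key
  exact key

lemma aux_S_nonneg (s c θ x : ℝ) (hx0 : 0 ≤ x) (hx1 : x ≤ 1) :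
    0 ≤ ∫ t in (0:ℝ)..x, Real.exp (-2*s*t/c) * (1 - t) ^ (-θ) := by
  apply intervalIntegral.integral_nonneg hx0
  intro t ht
  exact mul_nonneg (Real.exp_nonneg _) (Real.rpow_nonneg (by nlinarith [ht.2]) _)

lemma aux_S_upper1 (s c θ x : ℝ) (hs : 0 < s) (hc : 0 < c) (hθ : 2 ≤ θ)
    (hx0 : 0 < x) (hx1 : x < 1) :
    (∫ t in (0:ℝ)..x, Real.exp (-2*s*t/c) * (1 - t) ^ (-θ)) ≤
      ((1-x) ^ (1-θ) - 1) / (θ-1) := by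
  rw [← aux_integral θ x hθ hx0.le hx1]
  apply intervalIntegral.integral_mono_on hx0.le (aux_intble2 s c θ x hx0.le hx1)
    (aux_intble θ x hx0.le hx1)
  intro t ht
  have h2 : 0 ≤ (1 - t) ^ (-θ) := Real.rpow_nonneg (by nlinarith [ht.2]) _
  nlinarith [Real.exp_le_one_iff.2 (show -2*s*t/c ≤ 0 by
    apply div_nonpos_of_nonpos_of_nonneg _ hc.le; nlinarith [ht.1]), h2]

lemma aux_S_upper2 (s c θ x : ℝ) (hs : 0 < s) (hc : 0 < c) (hθ : 2 ≤ θ)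
    (hx0 : 0 < x) (hx1 : x < 1) :
    (∫ t in (0:ℝ)..x, Real.exp (-2*s*t/c) * (1 - t) ^ (-θ)) ≤ x * (1-x) ^ (-θ) := by
  have := intervalIntegral.integral_mono_on (μ := volume) hx0.le
    (aux_intble2 s c θ x hx0.le hx1)
    (intervalIntegrable_const (c := (1-x) ^ (-θ)))
    (fun t ht => by
      have hb : (0:ℝ) < 1 - t := by nlinarith [ht.2]
      have h1 : (1 - t) ^ (-θ) ≤ (1-x) ^ (-θ) :=
        Real.rpow_le_rpow_of_nonpos (by linarith) (by linarith [ht.2]) (by linarith)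
      have h2 : Real.exp (-2*s*t/c) ≤ 1 := Real.exp_le_one_iff.2 (by
        apply div_nonpos_of_nonpos_of_nonneg _ hc.le; nlinarith [ht.1])
      have h3 : 0 ≤ (1 - t) ^ (-θ) := Real.rpow_nonneg hb.le _
      nlinarith)
  simpa using this

set_option maxHeartbeats 2000000 in
/-- If `μ ≥ c`, then `m·S²` is not integrable on `(0,1)`, while `m·S` is
integrable on `(0,1)`, where `S` is the scale function and `m` the speed
density of the Wright–Fisher diffusion. -/
theorem speed_scale_integrability (s μ c : ℝ) (hs : 0 < s) (hμ : 0 < μ)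
    (hc : 0 < c) (h : c ≤ μ) :
    (¬ IntegrableOn
      (fun x : ℝ =>
        Real.exp (2 * s * x / c) * (1 - x) ^ (2 * μ / c - 1) / (c * x) *
          (∫ t in (0 : ℝ)..x, Real.exp (-2 * s * t / c) * (1 - t) ^ (-(2 * μ / c))) ^ 2)
      (Set.Ioo (0 : ℝ) 1)) ∧
    IntegrableOn
      (fun x : ℝ =>
        Real.exp (2 * s * x / c) * (1 - x) ^ (2 * μ / c - 1) / (c * x) *
          (∫ t in (0 : ℝ)..x, Real.exp (-2 * s * t / c) * (1 - t) ^ (-(2 * μ / c))))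
      (Set.Ioo (0 : ℝ) 1) := by
  set θ : ℝ := 2 * μ / c with hθdef
  have hθ : 2 ≤ θ := by
    rw [hθdef, le_div_iff₀ hc]; linarith
  set S : ℝ → ℝ := fun x => ∫ t in (0:ℝ)..x, Real.exp (-2*s*t/c) * (1 - t) ^ (-θ) with hSdef
  have hSnn : ∀ x ∈ Set.Ioo (0:ℝ) 1, 0 ≤ S x := fun x hx =>
    aux_S_nonneg s c θ x hx.1.le hx.2.le
  constructor
  · -- non-integrability of m S²
    intro hInt
    have h2 : IntegrableOn
        (fun x : ℝ =>
          Real.exp (2 * s * x / c) * (1 - x) ^ (θ - 1) / (c * x) * (S x) ^ 2)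
        (Set.Ioo (3/4 : ℝ) 1) :=
      hInt.mono_set (Set.Ioo_subset_Ioo (by norm_num) le_rfl)
    set Kc : ℝ := Real.exp (-(2*s/c)) ^ 2 / (2 * c * (θ-1)^2) with hKc
    have hKcpos : 0 < Kc := by
      apply div_pos (pow_pos (Real.exp_pos _) 2)
      have h1 : (0:ℝ) < θ - 1 := by linarith
      positivity
    -- pointwise lower bound
    have hlow : ∀ x ∈ Set.Ioo (3/4 : ℝ) 1,
        Kc * (1-x)⁻¹ ≤
          Real.exp (2 * s * x / c) * (1 - x) ^ (θ - 1) / (c * x) * (S x) ^ 2 := by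
      intro x hx
      have hx0 : (0:ℝ) < x := by linarith [hx.1]
      have hx1 : x < 1 := hx.2
      have h1x : (0:ℝ) < 1 - x := by linarith
      have hxIoo : x ∈ Set.Ioo (0:ℝ) 1 := ⟨hx0, hx1⟩
      set y : ℝ := (1-x) ^ (1-θ) with hy
      have hy0 : 0 < y := Real.rpow_pos_of_pos h1x _
      have hyinv : (1-x) ^ (θ-1) = y⁻¹ := by
        rw [hy, ← Real.rpow_neg h1x.le]
        norm_num
      have hygeq : (1-x)⁻¹ ≤ y := by
        rw [hy, ← Real.rpow_neg_one (1-x)]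
        exact Real.rpow_le_rpow_of_exponent_ge h1x (by linarith) (by linarith)
      have hz4 : (4:ℝ) < (1-x)⁻¹ := by
        rw [lt_inv_comm₀ (by norm_num) h1x]  -- guess
        · linarith [hx.1]
      have hy1 : (1:ℝ) ≤ y := by
        have : (1:ℝ) ≤ (1-x)⁻¹ := by
          rw [le_inv_comm₀ one_pos h1x]; linarith
        linarith
      set E : ℝ := Real.exp (-(2*s/c)) with hE
      have hE0 : 0 < E := Real.exp_pos _
      have hSlow : E * ((y - 1) / (θ-1)) ≤ S x := aux_S_lower s c θ x hs hc hθ hx0 hx1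
      have hlb_nn : 0 ≤ E * ((y - 1) / (θ-1)) := by
        apply mul_nonneg hE0.le
        apply div_nonneg (by linarith) (by linarith)
      have hsq : (E * ((y - 1) / (θ-1)))^2 ≤ (S x)^2 := by
        apply pow_le_pow_left₀ hlb_nn hSlow
      have hA : y⁻¹ / c ≤ Real.exp (2 * s * x / c) * (1 - x) ^ (θ - 1) / (c * x) := by
        rw [hyinv]
        have he1 : (1:ℝ) ≤ Real.exp (2 * s * x / c) := by
          rw [Real.one_le_exp_iff]; positivity
        rw [div_le_div_iff₀ (by positivity) (by positivity)]
        have hyinv0 : 0 ≤ y⁻¹ := by positivity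
        nlinarith [mul_nonneg (mul_nonneg hyinv0 hc.le) (sub_nonneg.2 hx1.le),
          mul_nonneg (mul_nonneg (sub_nonneg.2 he1) hyinv0) hc.le]
      have hQ : (y-1)^2 / y ≥ (1-x)⁻¹ / 2 := by
        have e1 : y - 2 ≤ (y-1)^2 / y := by
          rw [le_div_iff₀ hy0]; nlinarith
        have e2 : (1-x)⁻¹ / 2 ≤ y - 2 := by
          have : (1-x)⁻¹ ≤ y := hygeq
          linarith
        linarith
      have hθ1ne : θ - 1 ≠ 0 := by
        have : (0:ℝ) < θ - 1 := by linarith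
        exact this.ne'
      have hC0 : (0:ℝ) ≤ E^2 / (c * (θ-1)^2) := by positivity
      have e3 : Kc * (1-x)⁻¹ = (E^2/(c*(θ-1)^2)) * ((1-x)⁻¹/2) := by
        rw [hKc]; field_simp
      have e4 : (y⁻¹/c) * (E*((y-1)/(θ-1)))^2 = (E^2/(c*(θ-1)^2)) * ((y-1)^2/y) := by
        field_simp
      have e5 : Kc * (1-x)⁻¹ ≤ (y⁻¹/c)*(E*((y-1)/(θ-1)))^2 := by
        rw [e3, e4]; exact mul_le_mul_of_nonneg_left hQ hC0
      have e6 : (y⁻¹/c)*(E*((y-1)/(θ-1)))^2 ≤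
          Real.exp (2 * s * x / c) * (1 - x) ^ (θ - 1) / (c * x) * (S x) ^ 2 :=
        mul_le_mul hA hsq (by positivity) (by positivity)
      linarith
      -- end hlow
    -- derive integrability of (1-x)⁻¹ and contradict
    have hIntInv : IntegrableOn (fun x : ℝ => Kc * (1-x)⁻¹) (Set.Ioo (3/4 : ℝ) 1) := by
      apply Integrable.mono' h2
      · exact (((measurable_const.sub measurable_id).inv).const_mul Kc).aestronglyMeasurable
      · filter_upwards [ae_restrict_mem measurableSet_Ioo] with x hx
        rw [Real.norm_eq_abs, abs_of_nonneg (by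
          have h1x : (0:ℝ) < 1 - x := by linarith [hx.2]
          positivity)]
        exact hlow x hx
    have hIntInv2 : IntegrableOn (fun x : ℝ => (x - 1)⁻¹) (Set.Ioo (3/4 : ℝ) 1) := by
      have h3 := (hIntInv.const_mul Kc⁻¹).neg
      have h4 : IntegrableOn (fun x : ℝ => -(Kc⁻¹ * (Kc * (1-x)⁻¹))) (Set.Ioo (3/4:ℝ) 1) := h3
      apply h4.congr_fun ?_ measurableSet_Ioo
      intro x hx
      show -(Kc⁻¹ * (Kc * (1-x)⁻¹)) = (x-1)⁻¹
      rw [show Kc⁻¹ * (Kc * (1-x)⁻¹) = (1-x)⁻¹ from by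
        rw [← mul_assoc, inv_mul_cancel₀ hKcpos.ne', one_mul], neg_inv, neg_sub]
    have : IntervalIntegrable (fun x : ℝ => (x - 1)⁻¹) volume (3/4) 1 := by
      rw [intervalIntegrable_iff_integrableOn_Ioo_of_le (by norm_num)]
      exact hIntInv2
    rcases intervalIntegrable_sub_inv_iff.1 this with hcon | hcon
    · norm_num at hcon
    · exact hcon (by rw [Set.uIcc_of_le (by norm_num)]; constructor <;> norm_num)
  · -- integrability of m S
    set M : ℝ := 2 * Real.exp (2*s/c) / c with hM
    have hSmono : MonotoneOn S (Set.Ioo (0:ℝ) 1) := by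
      intro a ha b hb hab
      have h1 : IntervalIntegrable
          (fun t : ℝ => Real.exp (-2*s*t/c) * (1 - t) ^ (-θ)) volume 0 a :=
        aux_intble2 s c θ a ha.1.le ha.2
      have h2' : IntervalIntegrable
          (fun t : ℝ => Real.exp (-2*s*t/c) * (1 - t) ^ (-θ)) volume a b :=
        (aux_intble2 s c θ b hb.1.le hb.2).mono_set (by
          rw [Set.uIcc_of_le hab, Set.uIcc_of_le hb.1.le]
          exact Set.Icc_subset_Icc ha.1.le le_rfl)
      have hadd := intervalIntegral.integral_add_adjacent_intervals h1 h2'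
      have hnn : 0 ≤ ∫ t in a..b, Real.exp (-2*s*t/c) * (1 - t) ^ (-θ) :=
        intervalIntegral.integral_nonneg hab (fun t ht =>
          mul_nonneg (Real.exp_nonneg _)
            (Real.rpow_nonneg (by nlinarith [ht.2, hb.2]) _))
      show S a ≤ S b
      rw [hSdef]
      simp only
      rw [← hadd]
      linarith
    have hmeas : AEStronglyMeasurable
        (fun x : ℝ => Real.exp (2*s*x/c) * (1-x)^(θ-1)/(c*x) * S x)
        (volume.restrict (Set.Ioo (0:ℝ) 1)) := by
      apply AEStronglyMeasurable.mul
      · apply ContinuousOn.aestronglyMeasurable _ measurableSet_Ioo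
        apply ContinuousOn.div
        · exact (((continuous_const.mul continuous_id).div_const c).rexp).continuousOn.mul
            ((continuous_const.sub continuous_id).continuousOn.rpow_const
              (fun x hx => Or.inl (by
                simp only [ne_eq]
                intro hcon
                simp only [Set.mem_Ioo] at hx
                simp only [Pi.sub_apply, id_eq] at hcon
                nlinarith [hx.2])))
        · exact (continuous_const.mul continuous_id).continuousOn
        · intro x hx
          have : (0:ℝ) < c * x := mul_pos hc hx.1
          exact this.ne'
      · exact (aemeasurable_restrict_of_monotoneOn measurableSet_Ioo
          hSmono).aestronglyMeasurable
    apply Integrable.mono' (g := fun _ => M)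
      (integrableOn_const measure_Ioo_lt_top.ne) hmeas
    filter_upwards [ae_restrict_mem measurableSet_Ioo] with x hx
    have hx0 : (0:ℝ) < x := hx.1
    have hx1 : x < 1 := hx.2
    have h1x : (0:ℝ) < 1 - x := by linarith
    have hApos : 0 < Real.exp (2*s*x/c) * (1-x)^(θ-1)/(c*x) := by
      have := Real.rpow_pos_of_pos h1x (θ-1)
      positivity
    have hfnn : 0 ≤ Real.exp (2*s*x/c) * (1-x)^(θ-1)/(c*x) * S x :=
      mul_nonneg hApos.le (hSnn x hx)
    rw [Real.norm_eq_abs, abs_of_nonneg hfnn]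
    have hexp : Real.exp (2*s*x/c) ≤ Real.exp (2*s/c) := by
      apply Real.exp_le_exp.2
      rw [div_le_div_iff₀ hc hc]
      nlinarith [mul_pos hs hc]
    rcases le_or_gt x (1/2) with hhalf | hhalf
    · -- x ≤ 1/2 : use S x ≤ x (1-x)^(-θ)
      have hS2 := aux_S_upper2 s c θ x hs hc hθ hx0 hx1
      have step : Real.exp (2*s*x/c) * (1-x)^(θ-1)/(c*x) * S x ≤
          Real.exp (2*s*x/c) * (1-x)^(θ-1)/(c*x) * (x * (1-x)^(-θ)) :=
        mul_le_mul_of_nonneg_left hS2 hApos.le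
      have hrp : (1-x)^(θ-1) * (1-x)^(-θ) = (1-x)⁻¹ := by
        rw [← Real.rpow_add h1x, show θ-1 + -θ = -1 from by ring, Real.rpow_neg_one]
      have key : ∀ (E v w y z : ℝ), y ≠ 0 → z ≠ 0 →
          E * v / (z*y) * (y*w) = E * (v*w) / z := by
        intro E v w y z hy hz
        field_simp
      have heq : Real.exp (2*s*x/c) * (1-x)^(θ-1)/(c*x) * (x * (1-x)^(-θ)) =
          Real.exp (2*s*x/c) * (1-x)⁻¹ / c := by
        rw [key _ _ _ _ _ hx0.ne' hc.ne', hrp]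
      have hinv2 : (1-x)⁻¹ ≤ 2 := by
        rw [inv_le_comm₀ h1x (by norm_num)]
        norm_num
        linarith
      have : Real.exp (2*s*x/c) * (1-x)⁻¹ / c ≤ M := by
        rw [hM, div_le_div_iff₀ (by positivity) hc]
        nlinarith [Real.exp_pos (2*s*x/c), inv_pos.2 h1x, hexp,
          mul_le_mul hexp hinv2 (inv_pos.2 h1x).le (Real.exp_pos _).le]
      linarith [step, heq ▸ this]
    · -- x > 1/2 : use S x ≤ ((1-x)^(1-θ)-1)/(θ-1) ≤ (1-x)^(1-θ)
      have hS1 := aux_S_upper1 s c θ x hs hc hθ hx0 hx1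
      have hy1 : (1:ℝ) ≤ (1-x)^(1-θ) := by
        have h0 : (1:ℝ) ≤ (1-x)⁻¹ := by
          rw [le_inv_comm₀ one_pos h1x]; linarith
        calc (1:ℝ) ≤ (1-x)⁻¹ := h0
          _ ≤ (1-x)^(1-θ) := by
            rw [← Real.rpow_neg_one (1-x)]
            exact Real.rpow_le_rpow_of_exponent_ge h1x (by linarith) (by linarith)
      have hS1' : S x ≤ (1-x)^(1-θ) := by
        have := div_le_self (by linarith : (0:ℝ) ≤ (1-x)^(1-θ) - 1) (by linarith : (1:ℝ) ≤ θ-1)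
        linarith
      have step : Real.exp (2*s*x/c) * (1-x)^(θ-1)/(c*x) * S x ≤
          Real.exp (2*s*x/c) * (1-x)^(θ-1)/(c*x) * (1-x)^(1-θ) :=
        mul_le_mul_of_nonneg_left hS1' hApos.le
      have hrp : (1-x)^(θ-1) * (1-x)^(1-θ) = 1 := by
        rw [← Real.rpow_add h1x, show θ-1 + (1-θ) = 0 from by ring, Real.rpow_zero]
      have heq : Real.exp (2*s*x/c) * (1-x)^(θ-1)/(c*x) * (1-x)^(1-θ) =
          Real.exp (2*s*x/c) / (c*x) := by
        rw [div_mul_eq_mul_div, mul_assoc, hrp, mul_one]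
      have : Real.exp (2*s*x/c) / (c*x) ≤ M := by
        rw [hM, div_le_div_iff₀ (by positivity) hc]
        nlinarith [mul_le_mul_of_nonneg_right hexp hc.le,
          mul_nonneg (mul_nonneg (Real.exp_pos (2*s/c)).le hc.le)
            (by linarith : (0:ℝ) ≤ x - 1/2)]
      linarith [step, heq ▸ this]
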